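/- Let V be a finite-dimensional real inner product space, let Z₀ be a self-adjoint positive-definite linear endomorphism of V, and let a > 0, c > 0 be real numbers. For t ≤ 0 set S(t) = Z₀ + exp(a c t)(c·id − Z₀), where id is the identity endomorphism. Then: (i) S(t) is invertible for every t ≤ 0; (ii) Z(t) := c · Z₀ ∘ S(t)⁻¹ is self-adjoint for every t ≤ 0, with Z(0) = Z₀; (iii) the map t ↦ Z(t) is differentiable on (−∞, 0] with derivative Z′(t) = a · Z(t) ∘ (Z(t) − c·id); and (iv) Z(t) → c·id as t → −∞ (in the space of endomorphisms of V). -/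

import Mathlib

open scoped RealInnerProductSpace

set_option maxHeartbeats 1000000
set_option synthInstance.maxHeartbeats 400000

theorem aux_isUnit_of_inner_pos {V : Type*} [NormedAddCommGroup V] [InnerProductSpace ℝ V]
    [FiniteDimensional ℝ V] (T : V →L[ℝ] V) (h : ∀ x : V, x ≠ 0 → 0 < ⟪T x, x⟫) :
    IsUnit T := by
  have hinj : Function.Injective T := by
    refine (injective_iff_map_eq_zero T).mpr fun z hz => by_contra fun hz0 => ?_
    have := h z hz0
    rw [hz] at this
    simp at this
  let e := LinearEquiv.ofInjectiveEndo (T : V →ₗ[ℝ] V) hinj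
  refine ⟨⟨T, LinearMap.toContinuousLinearMap (e.symm : V →ₗ[ℝ] V), ?_, ?_⟩, rfl⟩
  · ext x
    exact e.apply_symm_apply x
  · ext x
    exact e.symm_apply_apply x


/-- the operator Riccati equation `Ż = a Z (Z − c·id)`. With `Z₀`
self-adjoint positive definite, `S t = Z₀ + exp(a c t)(c·id − Z₀)` and
`Z t = c·Z₀ ∘ S(t)⁻¹`: `S t` is invertible for `t ≤ 0`, `Z t` is self-adjoint with
`Z 0 = Z₀`, `Z` solves the Riccati ODE, and `Z t → c·id` as `t → −∞`. -/
theorem operator_riccati_partial_ricci_flow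
    {V : Type*} [NormedAddCommGroup V] [InnerProductSpace ℝ V] [FiniteDimensional ℝ V]
    (a c : ℝ) (ha : 0 < a) (hc : 0 < c)
    (Z₀ : V →L[ℝ] V)
    (hsym : ∀ x y : V, ⟪Z₀ x, y⟫ = ⟪x, Z₀ y⟫)
    (hpos : ∀ x : V, x ≠ 0 → 0 < ⟪Z₀ x, x⟫)
    (S Z : ℝ → V →L[ℝ] V)
    (hS : ∀ t : ℝ, S t = Z₀ + Real.exp (a * c * t) • (c • (1 : V →L[ℝ] V) - Z₀))
    (hZ : ∀ t : ℝ, Z t = c • (Z₀ * Ring.inverse (S t))) :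
    (∀ t ≤ (0 : ℝ), IsUnit (S t)) ∧
    (∀ t ≤ (0 : ℝ), ∀ x y : V, ⟪Z t x, y⟫ = ⟪x, Z t y⟫) ∧
    Z 0 = Z₀ ∧
    (∀ t ≤ (0 : ℝ), HasDerivAt Z (a • (Z t * (Z t - c • (1 : V →L[ℝ] V)))) t) ∧
    Filter.Tendsto Z Filter.atBot (nhds (c • (1 : V →L[ℝ] V))) := by
  set D : V →L[ℝ] V := c • (1 : V →L[ℝ] V) - Z₀ with hD
  -- Part (i): S t is a unit for t ≤ 0
  have hU : ∀ t ≤ (0 : ℝ), IsUnit (S t) := by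
    intro t ht
    refine aux_isUnit_of_inner_pos _ fun x hx => ?_
    have hx2 : 0 < ⟪x, x⟫ := by
      have : ‖x‖ ≠ 0 := norm_ne_zero_iff.mpr hx
      rw [real_inner_self_eq_norm_sq]
      positivity
    have he : 0 < Real.exp (a * c * t) := Real.exp_pos _
    have he1 : Real.exp (a * c * t) ≤ 1 := by
      rw [Real.exp_le_one_iff]
      exact mul_nonpos_of_nonneg_of_nonpos (by positivity) ht
    have hp := hpos x hx
    simp only [hS, hD, ContinuousLinearMap.add_apply, ContinuousLinearMap.smul_apply,
      ContinuousLinearMap.sub_apply, ContinuousLinearMap.one_apply,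
      inner_add_left, real_inner_smul_left, inner_sub_left]
    nlinarith [mul_pos he (mul_pos hc hx2), mul_nonneg (sub_nonneg.mpr he1) hp.le]
  -- symmetry of S t
  have hSsym : ∀ (t : ℝ) (x y : V), ⟪S t x, y⟫ = ⟪x, S t y⟫ := by
    intro t x y
    simp only [hS, hD, ContinuousLinearMap.add_apply, ContinuousLinearMap.smul_apply,
      ContinuousLinearMap.sub_apply, ContinuousLinearMap.one_apply,
      inner_add_left, inner_add_right, real_inner_smul_left, real_inner_smul_right,
      inner_sub_left, inner_sub_right, hsym, real_inner_comm x y]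
  -- symmetry of inverses
  have hWsym : ∀ t : ℝ, IsUnit (S t) →
      ∀ u v : V, ⟪Ring.inverse (S t) u, v⟫ = ⟪u, Ring.inverse (S t) v⟫ := by
    intro t ht u v
    set W := Ring.inverse (S t) with hW
    have hSW : S t * W = 1 := Ring.mul_inverse_cancel _ ht
    have happ : ∀ z : V, S t (W z) = z := fun z => by
      have := congrArg (fun A : V →L[ℝ] V => A z) hSW
      simpa using this
    calc ⟪W u, v⟫ = ⟪W u, S t (W v)⟫ := by rw [happ]
      _ = ⟪S t (W u), W v⟫ := (hSsym t _ _).symm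
      _ = ⟪u, W v⟫ := by rw [happ]
  -- commutation of Z₀ with inverses
  have hcomm : ∀ t : ℝ, IsUnit (S t) →
      Z₀ * Ring.inverse (S t) = Ring.inverse (S t) * Z₀ := by
    intro t ht
    set W := Ring.inverse (S t) with hW
    have hSW : S t * W = 1 := Ring.mul_inverse_cancel _ ht
    have hWS : W * S t = 1 := Ring.inverse_mul_cancel _ ht
    have h1 : Z₀ * S t = S t * Z₀ := by
      simp only [hS, hD, mul_add, add_mul, mul_sub, sub_mul, mul_smul_comm, smul_mul_assoc,
        mul_one, one_mul]
    have hWSX : ∀ X : V →L[ℝ] V, W * (S t * X) = X := fun X => by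
      rw [← mul_assoc, hWS, one_mul]
    have h2 := congrArg (fun A : V →L[ℝ] V => W * A * W) h1
    have h3 : W * Z₀ = Z₀ * W := by
      simpa only [mul_assoc, hSW, hWSX, mul_one] using h2
    exact h3.symm
  -- Part (ii): symmetry of Z t
  have part2 : ∀ t ≤ (0 : ℝ), ∀ x y : V, ⟪Z t x, y⟫ = ⟪x, Z t y⟫ := by
    intro t ht x y
    have ht' := hU t ht
    set W := Ring.inverse (S t) with hW
    have happc : W (Z₀ y) = Z₀ (W y) := by
      have := congrArg (fun A : V →L[ℝ] V => A y) (hcomm t ht')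
      simpa using this.symm
    simp only [hZ, ContinuousLinearMap.smul_apply, real_inner_smul_left, real_inner_smul_right,
      ContinuousLinearMap.mul_apply]
    rw [hsym, hWsym t ht', happc]
  -- Part (iii): Z 0 = Z₀
  have hS0 : S 0 = c • (1 : V →L[ℝ] V) := by
    simp [hS, hD]
  have hu0 : IsUnit (S 0) := hU 0 le_rfl
  have hinv0 : Ring.inverse (S 0) = c⁻¹ • (1 : V →L[ℝ] V) := by
    have hu : (c • (1 : V →L[ℝ] V)) * (c⁻¹ • (1 : V →L[ℝ] V)) = 1 := by
      rw [smul_mul_assoc, mul_smul_comm, smul_smul, one_mul, mul_inv_cancel₀ hc.ne', one_smul]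
    have hu' : (c⁻¹ • (1 : V →L[ℝ] V)) * (c • (1 : V →L[ℝ] V)) = 1 := by
      rw [smul_mul_assoc, mul_smul_comm, smul_smul, one_mul, inv_mul_cancel₀ hc.ne', one_smul]
    rw [hS0]
    exact Ring.inverse_unit ⟨c • (1 : V →L[ℝ] V), c⁻¹ • (1 : V →L[ℝ] V), hu, hu'⟩
  have part3 : Z 0 = Z₀ := by
    rw [hZ, hinv0, mul_smul_comm, mul_one, smul_smul, mul_inv_cancel₀ hc.ne', one_smul]
  -- Part (iv): the ODE
  have part4 : ∀ t ≤ (0 : ℝ), HasDerivAt Z (a • (Z t * (Z t - c • (1 : V →L[ℝ] V)))) t := by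
    intro t ht
    have ht' := hU t ht
    set e := Real.exp (a * c * t) with hee
    set iS := Ring.inverse (S t) with hiSdef
    have hSd : HasDerivAt S ((a * c * e) • D) t := by
      have h1 : HasDerivAt (fun s : ℝ => Real.exp (a * c * s)) (a * c * e) t := by
        have h0 : HasDerivAt (fun s : ℝ => a * c * s) (a * c) t := by
          simpa using (hasDerivAt_id t).const_mul (a * c)
        have := (Real.hasDerivAt_exp (a * c * t)).comp t h0
        simpa [Function.comp_def, hee, mul_comm] using this
      have := (h1.smul_const D).const_add Z₀
      have heq : (fun s => Z₀ + Real.exp (a * c * s) • D) = S := by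
        funext s; rw [hS s]
      rw [heq] at this
      exact this
    have hiSu : (↑ht'.unit⁻¹ : V →L[ℝ] V) = iS := by
      have h5 : Ring.inverse ((ht'.unit : V →L[ℝ] V)) = ↑ht'.unit⁻¹ := Ring.inverse_unit _
      rw [ht'.unit_spec] at h5
      exact h5.symm
    have hWd : HasDerivAt (fun s => Ring.inverse (S s))
        (-(iS * ((a * c * e) • D) * iS)) t := by
      have hfd := hasFDerivAt_ringInverse (𝕜 := ℝ) ht'.unit
      rw [ht'.unit_spec] at hfd
      have := hfd.comp_hasDerivAt t hSd
      simpa [ContinuousLinearMap.mulLeftRight_apply, hiSu, Function.comp_def] using this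
    have hZd : HasDerivAt Z (c • (Z₀ * (-(iS * ((a * c * e) • D) * iS)))) t := by
      have := (hWd.const_mul Z₀).const_smul c
      have heq : (fun s => c • (Z₀ * Ring.inverse (S s))) = Z := by
        funext s; rw [hZ s]
      rw [← heq]
      exact this
    convert hZd using 1
    -- algebraic identity
    have hSW : S t * iS = 1 := Ring.mul_inverse_cancel _ ht'
    have he0 : e ≠ 0 := by rw [hee]; exact Real.exp_ne_zero _
    rw [hZ t]
    have h6 : e • D = S t - Z₀ := by rw [hS t, add_sub_cancel_left]
    have h7 : iS * ((e • D) * iS) = iS - iS * (Z₀ * iS) := by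
      rw [h6, sub_mul, hSW, mul_sub, mul_one]
    have h8 : e • (iS * (D * iS)) = iS - iS * (Z₀ * iS) := by
      rw [← h7]
      simp [smul_mul_assoc, mul_smul_comm]
    have keyR : iS * (D * iS) = e⁻¹ • (iS - iS * (Z₀ * iS)) := by
      rw [← h8, smul_smul, inv_mul_cancel₀ he0, one_smul]
    simp only [mul_neg, smul_neg, mul_smul_comm, smul_mul_assoc, smul_smul, smul_sub, sub_smul,
      mul_sub, sub_mul, mul_one, one_mul, mul_assoc, keyR]
    match_scalars <;> field_simp <;> ring
  -- Part (v): limit at -infinity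
  have hUZ : IsUnit Z₀ := aux_isUnit_of_inner_pos Z₀ hpos
  have hmul : Filter.Tendsto (fun t : ℝ => a * c * t) Filter.atBot Filter.atBot := by
    exact Filter.tendsto_id.const_mul_atBot (mul_pos ha hc)
  have hexp : Filter.Tendsto (fun t : ℝ => Real.exp (a * c * t)) Filter.atBot (nhds 0) :=
    Real.tendsto_exp_atBot.comp hmul
  have hStend : Filter.Tendsto S Filter.atBot (nhds Z₀) := by
    have := (hexp.smul_const D).const_add Z₀
    have heq : (fun s => Z₀ + Real.exp (a * c * s) • D) = S := by
      funext s; rw [hS s]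
    rw [heq] at this
    simpa using this
  have hinvtend : Filter.Tendsto (fun t => Ring.inverse (S t)) Filter.atBot
      (nhds (Ring.inverse Z₀)) := by
    have hcont : ContinuousAt Ring.inverse Z₀ := by
      have := NormedRing.inverse_continuousAt hUZ.unit
      rwa [hUZ.unit_spec] at this
    exact hcont.tendsto.comp hStend
  have part5 : Filter.Tendsto Z Filter.atBot (nhds (c • (1 : V →L[ℝ] V))) := by
    have hmt : Filter.Tendsto (fun t => Z₀ * Ring.inverse (S t)) Filter.atBot
        (nhds (Z₀ * Ring.inverse Z₀)) := Filter.Tendsto.mul tendsto_const_nhds hinvtend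
    have := hmt.const_smul c
    have heq : (fun s => c • (Z₀ * Ring.inverse (S s))) = Z := by
      funext s; rw [hZ s]
    rw [heq] at this
    rwa [Ring.mul_inverse_cancel _ hUZ] at this
  exact ⟨hU, part2, part3, part4, part5⟩
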